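/- Let P be a set, let ρ, p̃ : P → [0,∞) be functions with sup_{x∈P} |p̃(x) − ρ(x)| ≤ ε for some ε ≥ 0, and let q ∈ (0,1), V > 0, γ ∈ (0,1). Then for every x ∈ P, ρ(x)/( q/V + (1−q)·p̃(x) ) ≤ 1/((1−q)γ) + V·ε/(q(1−γ)). -/

import Mathlib

/-- elementary ratio inequality. If `|p̃ − ρ| ≤ ε` uniformly on `P`,
`ρ, p̃ ≥ 0`, `q ∈ (0,1)`, `V > 0` and `γ ∈ (0,1)`, then for every `x ∈ P`,
`ρ(x)/(q/V + (1−q) p̃(x)) ≤ 1/((1−q)γ) + V ε/(q(1−γ))`. -/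
theorem stmt_8 {α : Type*} (P : Set α) (ρ ptilde : α → ℝ)
    (hρ : ∀ x ∈ P, 0 ≤ ρ x) (hptilde : ∀ x ∈ P, 0 ≤ ptilde x)
    (ε : ℝ) (hε : 0 ≤ ε) (hclose : ∀ x ∈ P, |ptilde x - ρ x| ≤ ε)
    (q : ℝ) (hq0 : 0 < q) (hq1 : q < 1)
    (V : ℝ) (hV : 0 < V)
    (γ : ℝ) (hγ0 : 0 < γ) (hγ1 : γ < 1) :
    ∀ x ∈ P, ρ x / (q / V + (1 - q) * ptilde x) ≤
      1 / ((1 - q) * γ) + V * ε / (q * (1 - γ)) := by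
  intro x hx
  have hρx := hρ x hx
  have hpx := hptilde x hx
  have hc := hclose x hx
  have h1q : 0 < 1 - q := by linarith
  have h1γ : 0 < 1 - γ := by linarith
  have hD : 0 < q / V + (1 - q) * ptilde x := by positivity
  have hA : 0 ≤ 1 / ((1 - q) * γ) := by positivity
  have hB : 0 ≤ V * ε / (q * (1 - γ)) := by positivity
  by_cases hcase : γ * ρ x ≤ ptilde x
  · -- ρ/D ≤ 1/((1-q)γ)
    have key : ρ x / (q / V + (1 - q) * ptilde x) ≤ 1 / ((1 - q) * γ) := by
      rw [div_le_div_iff₀ hD (by positivity)]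
      have : (1 - q) * γ * ρ x ≤ (1 - q) * ptilde x := by nlinarith
      nlinarith [div_pos hq0 hV]
    linarith
  · push_neg at hcase
    have hρε : (1 - γ) * ρ x ≤ ε := by
      have := abs_le.mp hc
      nlinarith
    have key : ρ x / (q / V + (1 - q) * ptilde x) ≤ V * ε / (q * (1 - γ)) := by
      have h2 : ρ x / (q / V + (1 - q) * ptilde x) ≤ ρ x / (q / V) := by
        apply div_le_div_of_nonneg_left hρx (by positivity) <;> nlinarith
      have h3 : ρ x / (q / V) ≤ V * ε / (q * (1 - γ)) := by
        rw [div_le_div_iff₀ (by positivity) (by positivity)]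
        have : V * ε * (q / V) = q * ε := by field_simp
        rw [this]; nlinarith
      linarith
    linarith
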